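/- For every s ∈ ℝ^m and every real t ≠ 0, the kernel of the derivative Df̃_{((0,0,0,s),t)} : ℝ^n × ℝ → ℝ^{n+k} is exactly the one-dimensional span of the vector (0, 1) (the t-coordinate direction). -/

import Mathlib

noncomputable section

open scoped RealInnerProductSpace

/-- Index type for the domain `ℝⁿ`, `n = 2k+2+m`: coordinates `x` (2k of them),
`y`, `z`, and `s` (m of them). -/
abbrev DomIx (k m : ℕ) := (Fin (2*k)) ⊕ Unit ⊕ Unit ⊕ (Fin m)

/-- The domain `ℝⁿ` with its Euclidean inner product. -/
abbrev Dom (k m : ℕ) := EuclideanSpace ℝ (DomIx k m)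

/-- Index type for the codomain `ℝ^{n+k}`: coordinates `X` (2k+1), `Y` (k), `Z`, `S` (m). -/
abbrev CodIx (k m : ℕ) := (Fin (2*k+1)) ⊕ (Fin k) ⊕ Unit ⊕ (Fin m)

/-- The codomain `ℝ^{n+k}` with its Euclidean inner product. -/
abbrev Cod (k m : ℕ) := EuclideanSpace ℝ (CodIx k m)

/-- The `x`-coordinates of a point (0-based: `px p j` is `x_{j+1}`). -/
def px {k m : ℕ} (p : Dom k m) (j : Fin (2*k)) : ℝ := p (Sum.inl j)

/-- The `y`-coordinate of a point. -/
def py {k m : ℕ} (p : Dom k m) : ℝ := p (Sum.inr (Sum.inl ()))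

/-- The `z`-coordinate of a point. -/
def pz {k m : ℕ} (p : Dom k m) : ℝ := p (Sum.inr (Sum.inr (Sum.inl ())))

/-- The `s`-coordinates of a point. -/
def ps {k m : ℕ} (p : Dom k m) (j : Fin m) : ℝ := p (Sum.inr (Sum.inr (Sum.inr j)))

/-- The (0-based) index of the coordinate `x_{2i-1}` (1-based), for `i : Fin k` (0-based). -/
def xo {k : ℕ} (i : Fin k) : Fin (2*k) := ⟨2*i.1, by have := i.isLt; omega⟩

/-- The (0-based) index of the coordinate `x_{2i}` (1-based), for `i : Fin k` (0-based). -/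
def xe {k : ℕ} (i : Fin k) : Fin (2*k) := ⟨2*i.1+1, by have := i.isLt; omega⟩

/-- The cusp normal form `f : ℝⁿ → ℝ^{n+k}`:
`X_i = x_i`, `X_{2k+1} = y`, `Y_i = z x_{2i-1} + z² x_{2i}`, `Z = z y + z³`, `S_j = s_j`. -/
def cuspF (k m : ℕ) (p : Dom k m) : Cod k m :=
  (EuclideanSpace.equiv (CodIx k m) ℝ).symm fun q =>
    match q with
    | Sum.inl j => if h : j.1 < 2*k then px p ⟨j.1, h⟩ else py p
    | Sum.inr (Sum.inl i) => pz p * px p (xo i) + (pz p)^2 * px p (xe i)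
    | Sum.inr (Sum.inr (Sum.inl _)) => pz p * py p + (pz p)^3
    | Sum.inr (Sum.inr (Sum.inr j)) => ps p j

/-- The singular set `Σ(f)` of the cusp normal form:
`x_{2i-1} + 2 z x_{2i} = 0` for all `i` and `y + 3z² = 0`. -/
def SingSet (k m : ℕ) : Set (Dom k m) :=
  {p | (∀ i : Fin k, px p (xo i) + 2 * pz p * px p (xe i) = 0) ∧ py p + 3 * (pz p)^2 = 0}

/-- The standard basis vector `e_z` of the domain. -/
def ez (k m : ℕ) : Dom k m := EuclideanSpace.single (Sum.inr (Sum.inr (Sum.inl ()))) 1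


/-- The section `σ : ℝⁿ → ℝ^{n+k}` given coordinatewise (1-based, `1 ≤ i ≤ k`) by
`σ_{X_{2i−1}} = −2z x_{2i}/(1+z²+z⁴)`, `σ_{X_{2i}} = −2z² x_{2i}/(1+z²+z⁴)`,
`σ_{X_{2k+1}} = −6z²/(1+z²)`, `σ_{Y_i} = 2x_{2i}/(1+z²+z⁴)`, `σ_Z = 6z/(1+z²)`, `σ_{S_j} = 0`. -/
def sigmaF (k m : ℕ) (p : Dom k m) : Cod k m :=
  (EuclideanSpace.equiv (CodIx k m) ℝ).symm fun q =>
    match q with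
    | Sum.inl j =>
        if h : j.1 < 2*k then
          if h2 : j.1 % 2 = 0 then
            -- the coordinate `X_{2i-1}` (1-based) with `2i-1 = j.1+1`, so `x_{2i} = x`-coord `j.1+1`
            -2 * pz p * px p ⟨j.1+1, by omega⟩ / (1 + (pz p)^2 + (pz p)^4)
          else
            -- the coordinate `X_{2i}` (1-based) with `2i = j.1+1`, so `x_{2i} = x`-coord `j.1`
            -2 * (pz p)^2 * px p ⟨j.1, h⟩ / (1 + (pz p)^2 + (pz p)^4)
        else
          -- the coordinate `X_{2k+1}`
          -6 * (pz p)^2 / (1 + (pz p)^2)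
    | Sum.inr (Sum.inl i) => 2 * px p (xe i) / (1 + (pz p)^2 + (pz p)^4)
    | Sum.inr (Sum.inr (Sum.inl _)) => 6 * pz p / (1 + (pz p)^2)
    | Sum.inr (Sum.inr (Sum.inr _)) => 0

/-- The de-suspension `f̃ : ℝⁿ × ℝ → ℝ^{n+k}`, `f̃(p, t) = f(p) + t σ(p)`. -/
def ftilde (k m : ℕ) (q : Dom k m × ℝ) : Cod k m :=
  cuspF k m q.1 + q.2 • sigmaF k m q.1

/-- The point `(0, 0, 0, s) ∈ ℝⁿ`. -/
def pOfS (k m : ℕ) (s : Fin m → ℝ) : Dom k m :=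
  (EuclideanSpace.equiv (DomIx k m) ℝ).symm fun q =>
    match q with
    | Sum.inl _ => 0
    | Sum.inr (Sum.inl _) => 0
    | Sum.inr (Sum.inr (Sum.inl _)) => 0
    | Sum.inr (Sum.inr (Sum.inr j)) => s j

namespace S7

variable {k m : ℕ}

/-- projection onto `x_j` coordinate of the `Dom × ℝ` product -/
def PX (k m : ℕ) (j : Fin (2*k)) : (Dom k m × ℝ) →L[ℝ] ℝ :=
  (EuclideanSpace.proj (Sum.inl j : DomIx k m)).comp
    (ContinuousLinearMap.fst ℝ (Dom k m) ℝ)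

def PY (k m : ℕ) : (Dom k m × ℝ) →L[ℝ] ℝ :=
  (EuclideanSpace.proj (Sum.inr (Sum.inl ()) : DomIx k m)).comp
    (ContinuousLinearMap.fst ℝ (Dom k m) ℝ)

def PZ (k m : ℕ) : (Dom k m × ℝ) →L[ℝ] ℝ :=
  (EuclideanSpace.proj (Sum.inr (Sum.inr (Sum.inl ())) : DomIx k m)).comp
    (ContinuousLinearMap.fst ℝ (Dom k m) ℝ)

def PS (k m : ℕ) (j : Fin m) : (Dom k m × ℝ) →L[ℝ] ℝ :=
  (EuclideanSpace.proj (Sum.inr (Sum.inr (Sum.inr j)) : DomIx k m)).comp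
    (ContinuousLinearMap.fst ℝ (Dom k m) ℝ)

@[simp] lemma PX_apply (j : Fin (2*k)) (w : Dom k m × ℝ) : PX k m j w = px w.1 j := rfl
@[simp] lemma PY_apply (w : Dom k m × ℝ) : PY k m w = py w.1 := rfl
@[simp] lemma PZ_apply (w : Dom k m × ℝ) : PZ k m w = pz w.1 := rfl
@[simp] lemma PS_apply (j : Fin m) (w : Dom k m × ℝ) : PS k m j w = ps w.1 j := rfl

/-- the claimed derivative, componentwise -/
def F (k m : ℕ) (t : ℝ) : CodIx k m → ((Dom k m × ℝ) →L[ℝ] ℝ)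
  | Sum.inl j => if h : j.1 < 2*k then PX k m ⟨j.1, h⟩ else PY k m
  | Sum.inr (Sum.inl i) => (2*t) • PX k m (xe i)
  | Sum.inr (Sum.inr (Sum.inl _)) => (6*t) • PZ k m
  | Sum.inr (Sum.inr (Sum.inr j)) => PS k m j

/-- the claimed derivative -/
def L (k m : ℕ) (t : ℝ) : (Dom k m × ℝ) →L[ℝ] Cod k m :=
  (((EuclideanSpace.equiv (CodIx k m) ℝ).symm :
      (CodIx k m → ℝ) ≃L[ℝ] Cod k m) : (CodIx k m → ℝ) →L[ℝ] Cod k m).comp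
    (ContinuousLinearMap.pi (F k m t))

@[simp] lemma px_pOfS (s : Fin m → ℝ) (j : Fin (2*k)) : px (pOfS k m s) j = 0 := rfl
@[simp] lemma py_pOfS (s : Fin m → ℝ) : py (pOfS k m s) = 0 := rfl
@[simp] lemma pz_pOfS (s : Fin m → ℝ) : pz (pOfS k m s) = 0 := rfl
@[simp] lemma ps_pOfS (s : Fin m → ℝ) (j : Fin m) : ps (pOfS k m s) j = s j := rfl

lemma hx (j : Fin (2*k)) (w : Dom k m × ℝ) :
    HasFDerivAt (fun w : Dom k m × ℝ => px w.1 j) (PX k m j) w :=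
  (PX k m j).hasFDerivAt

lemma hy (w : Dom k m × ℝ) :
    HasFDerivAt (fun w : Dom k m × ℝ => py w.1) (PY k m) w :=
  (PY k m).hasFDerivAt

lemma hz (w : Dom k m × ℝ) :
    HasFDerivAt (fun w : Dom k m × ℝ => pz w.1) (PZ k m) w :=
  (PZ k m).hasFDerivAt

lemma hs (j : Fin m) (w : Dom k m × ℝ) :
    HasFDerivAt (fun w : Dom k m × ℝ => ps w.1 j) (PS k m j) w :=
  (PS k m j).hasFDerivAt

lemma hT (w : Dom k m × ℝ) :
    HasFDerivAt (fun w : Dom k m × ℝ => w.2) (ContinuousLinearMap.snd ℝ (Dom k m) ℝ) w :=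
  hasFDerivAt_snd

/-- differentiability of the inverse of `1 + z² + z⁴` at the base point -/
lemma hinv4 (s : Fin m → ℝ) (t : ℝ) :
    DifferentiableAt ℝ
      (fun w : Dom k m × ℝ => (1 + (pz w.1)^2 + (pz w.1)^4)⁻¹) (pOfS k m s, t) := by
  have hd : DifferentiableAt ℝ
      (fun w : Dom k m × ℝ => 1 + (pz w.1)^2 + (pz w.1)^4) (pOfS k m s, t) := by
    have := (hz (k := k) (m := m) (pOfS k m s, t)).differentiableAt
    fun_prop
  refine hd.inv ?_
  simp

/-- differentiability of the inverse of `1 + z²` at the base point -/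
lemma hinv2 (s : Fin m → ℝ) (t : ℝ) :
    DifferentiableAt ℝ
      (fun w : Dom k m × ℝ => (1 + (pz w.1)^2)⁻¹) (pOfS k m s, t) := by
  have hd : DifferentiableAt ℝ
      (fun w : Dom k m × ℝ => 1 + (pz w.1)^2) (pOfS k m s, t) := by
    have := (hz (k := k) (m := m) (pOfS k m s, t)).differentiableAt
    fun_prop
  refine hd.inv ?_
  simp

set_option maxHeartbeats 4000000 in
/-- The main derivative computation. -/
theorem hasF (k m : ℕ) (s : Fin m → ℝ) (t : ℝ) :
    HasFDerivAt (ftilde k m) (L k m t) (pOfS k m s, t) := by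
  rw [← (EuclideanSpace.equiv (CodIx k m) ℝ).comp_hasFDerivAt_iff]
  have hcomp : ((EuclideanSpace.equiv (CodIx k m) ℝ : Cod k m ≃L[ℝ] (CodIx k m → ℝ)) :
      Cod k m →L[ℝ] (CodIx k m → ℝ)).comp (L k m t)
      = ContinuousLinearMap.pi (F k m t) := by
    ext w q <;> rfl
  rw [hcomp]
  apply hasFDerivAt_pi''
  intro q
  rw [ContinuousLinearMap.proj_pi]
  have h4 := (hinv4 (k := k) s t).hasFDerivAt
  have h2i := (hinv2 (k := k) s t).hasFDerivAt
  match q with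
  | Sum.inl j =>
    have hfun0 : (fun w : Dom k m × ℝ =>
        (⇑(EuclideanSpace.equiv (CodIx k m) ℝ) ∘ ftilde k m) w (Sum.inl j))
        = fun w : Dom k m × ℝ =>
          (if h : j.1 < 2*k then px w.1 ⟨j.1, h⟩ else py w.1) +
            w.2 * (if h : j.1 < 2*k then
                (if h2 : j.1 % 2 = 0 then
                  -2 * pz w.1 * px w.1 ⟨j.1+1, by omega⟩ / (1 + (pz w.1)^2 + (pz w.1)^4)
                else
                  -2 * (pz w.1)^2 * px w.1 ⟨j.1, h⟩ / (1 + (pz w.1)^2 + (pz w.1)^4))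
              else -6 * (pz w.1)^2 / (1 + (pz w.1)^2)) := rfl
    rw [hfun0]
    by_cases h : j.1 < 2*k
    · by_cases h2 : j.1 % 2 = 0
      · have hF : F k m t (Sum.inl j) = PX k m ⟨j.1, h⟩ := by
          simp only [F]; rw [dif_pos h]
        rw [hF]
        have hfun : (fun w : Dom k m × ℝ =>
            (if h : j.1 < 2*k then px w.1 ⟨j.1, h⟩ else py w.1) +
              w.2 * (if h : j.1 < 2*k then
                  (if h2 : j.1 % 2 = 0 then
                    -2 * pz w.1 * px w.1 ⟨j.1+1, by omega⟩ / (1 + (pz w.1)^2 + (pz w.1)^4)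
                  else
                    -2 * (pz w.1)^2 * px w.1 ⟨j.1, h⟩ / (1 + (pz w.1)^2 + (pz w.1)^4))
                else -6 * (pz w.1)^2 / (1 + (pz w.1)^2)))
            = fun w : Dom k m × ℝ =>
              px w.1 ⟨j.1, h⟩ +
                w.2 * (-2 * pz w.1 * px w.1 ⟨j.1+1, by omega⟩ *
                  (1 + (pz w.1)^2 + (pz w.1)^4)⁻¹) := by
          funext w
          rw [dif_pos h, dif_pos h, dif_pos h2, div_eq_mul_inv]
        rw [hfun]
        have H := (hx (k := k) (m := m) ⟨j.1, h⟩ (pOfS k m s, t)).add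
          ((hT (pOfS k m s, t)).mul
            ((((hz (pOfS k m s, t)).const_mul (-2)).mul (hx ⟨j.1+1, by omega⟩ (pOfS k m s, t))).mul h4))
        convert H using 1
        ext w
        all_goals
          simp only [ContinuousLinearMap.add_apply, ContinuousLinearMap.coe_comp',
            Function.comp_apply, ContinuousLinearMap.smul_apply, ContinuousLinearMap.inl_apply,
            ContinuousLinearMap.inr_apply, PX_apply, PY_apply, PZ_apply, PS_apply,
            ContinuousLinearMap.coe_snd', ContinuousLinearMap.coe_fst', smul_eq_mul,
            px_pOfS, py_pOfS, pz_pOfS, ps_pOfS, zero_mul, mul_zero, zero_add, add_zero,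
            zero_pow, pow_zero, one_mul, mul_one, neg_zero, inv_one, zero_smul, smul_zero,
            Pi.add_apply, Pi.mul_apply]
          try ring
      · have hF : F k m t (Sum.inl j) = PX k m ⟨j.1, h⟩ := by
          simp only [F]; rw [dif_pos h]
        rw [hF]
        have hfun : (fun w : Dom k m × ℝ =>
            (if h : j.1 < 2*k then px w.1 ⟨j.1, h⟩ else py w.1) +
              w.2 * (if h : j.1 < 2*k then
                  (if h2 : j.1 % 2 = 0 then
                    -2 * pz w.1 * px w.1 ⟨j.1+1, by omega⟩ / (1 + (pz w.1)^2 + (pz w.1)^4)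
                  else
                    -2 * (pz w.1)^2 * px w.1 ⟨j.1, h⟩ / (1 + (pz w.1)^2 + (pz w.1)^4))
                else -6 * (pz w.1)^2 / (1 + (pz w.1)^2)))
            = fun w : Dom k m × ℝ =>
              px w.1 ⟨j.1, h⟩ +
                w.2 * (-2 * (pz w.1 * pz w.1) * px w.1 ⟨j.1, h⟩ *
                  (1 + (pz w.1)^2 + (pz w.1)^4)⁻¹) := by
          funext w
          rw [dif_pos h, dif_pos h, dif_neg h2, div_eq_mul_inv]
          ring
        rw [hfun]
        have H := (hx (k := k) (m := m) ⟨j.1, h⟩ (pOfS k m s, t)).add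
          ((hT (pOfS k m s, t)).mul
            (((((hz (pOfS k m s, t)).mul (hz (pOfS k m s, t))).const_mul (-2)).mul
                (hx ⟨j.1, h⟩ (pOfS k m s, t))).mul h4))
        convert H using 1
        ext w
        all_goals
          simp only [ContinuousLinearMap.add_apply, ContinuousLinearMap.coe_comp',
            Function.comp_apply, ContinuousLinearMap.smul_apply, ContinuousLinearMap.inl_apply,
            ContinuousLinearMap.inr_apply, PX_apply, PY_apply, PZ_apply, PS_apply,
            ContinuousLinearMap.coe_snd', ContinuousLinearMap.coe_fst', smul_eq_mul,
            px_pOfS, py_pOfS, pz_pOfS, ps_pOfS, zero_mul, mul_zero, zero_add, add_zero,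
            zero_pow, pow_zero, one_mul, mul_one, neg_zero, inv_one, zero_smul, smul_zero,
            Pi.add_apply, Pi.mul_apply]
          try ring
    · have hF : F k m t (Sum.inl j) = PY k m := by
        simp only [F]; rw [dif_neg h]
      rw [hF]
      have hfun : (fun w : Dom k m × ℝ =>
          (if h : j.1 < 2*k then px w.1 ⟨j.1, h⟩ else py w.1) +
            w.2 * (if h : j.1 < 2*k then
                (if h2 : j.1 % 2 = 0 then
                  -2 * pz w.1 * px w.1 ⟨j.1+1, by omega⟩ / (1 + (pz w.1)^2 + (pz w.1)^4)
                else
                  -2 * (pz w.1)^2 * px w.1 ⟨j.1, h⟩ / (1 + (pz w.1)^2 + (pz w.1)^4))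
              else -6 * (pz w.1)^2 / (1 + (pz w.1)^2)))
          = fun w : Dom k m × ℝ =>
            py w.1 + w.2 * (-6 * (pz w.1 * pz w.1) * (1 + (pz w.1)^2)⁻¹) := by
        funext w
        rw [dif_neg h, dif_neg h, div_eq_mul_inv]
        ring
      rw [hfun]
      have H := (hy (k := k) (m := m) (pOfS k m s, t)).add
        ((hT (pOfS k m s, t)).mul
          ((((hz (pOfS k m s, t)).mul (hz (pOfS k m s, t))).const_mul (-6)).mul h2i))
      convert H using 1
      ext w
      all_goals
        simp only [ContinuousLinearMap.add_apply, ContinuousLinearMap.coe_comp',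
          Function.comp_apply, ContinuousLinearMap.smul_apply, ContinuousLinearMap.inl_apply,
          ContinuousLinearMap.inr_apply, PX_apply, PY_apply, PZ_apply, PS_apply,
          ContinuousLinearMap.coe_snd', ContinuousLinearMap.coe_fst', smul_eq_mul,
          px_pOfS, py_pOfS, pz_pOfS, ps_pOfS, zero_mul, mul_zero, zero_add, add_zero,
          zero_pow, pow_zero, one_mul, mul_one, neg_zero, inv_one, zero_smul, smul_zero,
            Pi.add_apply, Pi.mul_apply]
        try ring
  | Sum.inr (Sum.inl i) =>
    have hfun0 : (fun w : Dom k m × ℝ =>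
        (⇑(EuclideanSpace.equiv (CodIx k m) ℝ) ∘ ftilde k m) w (Sum.inr (Sum.inl i)))
        = fun w : Dom k m × ℝ =>
          (pz w.1 * px w.1 (xo i) + (pz w.1)^2 * px w.1 (xe i)) +
            w.2 * (2 * px w.1 (xe i) / (1 + (pz w.1)^2 + (pz w.1)^4)) := rfl
    rw [hfun0]
    have hfun : (fun w : Dom k m × ℝ =>
        (pz w.1 * px w.1 (xo i) + (pz w.1)^2 * px w.1 (xe i)) +
          w.2 * (2 * px w.1 (xe i) / (1 + (pz w.1)^2 + (pz w.1)^4)))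
        = fun w : Dom k m × ℝ =>
          (pz w.1 * px w.1 (xo i) + (pz w.1 * pz w.1) * px w.1 (xe i)) +
            w.2 * (2 * px w.1 (xe i) * (1 + (pz w.1)^2 + (pz w.1)^4)⁻¹) := by
      funext w
      rw [div_eq_mul_inv]
      ring
    rw [hfun]
    have hF : F k m t (Sum.inr (Sum.inl i)) = (2*t) • PX k m (xe i) := by simp only [F]
    rw [hF]
    have H := (((hz (k := k) (m := m) (pOfS k m s, t)).mul (hx (xo i) (pOfS k m s, t))).add
        (((hz (pOfS k m s, t)).mul (hz (pOfS k m s, t))).mul (hx (xe i) (pOfS k m s, t)))).add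
      ((hT (pOfS k m s, t)).mul (((hx (xe i) (pOfS k m s, t)).const_mul 2).mul h4))
    convert H using 1
    ext w
    all_goals
      simp only [ContinuousLinearMap.add_apply, ContinuousLinearMap.coe_comp',
        Function.comp_apply, ContinuousLinearMap.smul_apply, ContinuousLinearMap.inl_apply,
        ContinuousLinearMap.inr_apply, PX_apply, PY_apply, PZ_apply, PS_apply,
        ContinuousLinearMap.coe_snd', ContinuousLinearMap.coe_fst', smul_eq_mul,
        px_pOfS, py_pOfS, pz_pOfS, ps_pOfS, zero_mul, mul_zero, zero_add, add_zero,
        zero_pow, pow_zero, one_mul, mul_one, neg_zero, inv_one, zero_smul, smul_zero,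
            Pi.add_apply, Pi.mul_apply, smul_smul]
      try ring
  | Sum.inr (Sum.inr (Sum.inl u)) =>
    have hfun0 : (fun w : Dom k m × ℝ =>
        (⇑(EuclideanSpace.equiv (CodIx k m) ℝ) ∘ ftilde k m) w (Sum.inr (Sum.inr (Sum.inl u))))
        = fun w : Dom k m × ℝ =>
          (pz w.1 * py w.1 + (pz w.1)^3) + w.2 * (6 * pz w.1 / (1 + (pz w.1)^2)) := rfl
    rw [hfun0]
    have hfun : (fun w : Dom k m × ℝ =>
        (pz w.1 * py w.1 + (pz w.1)^3) + w.2 * (6 * pz w.1 / (1 + (pz w.1)^2)))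
        = fun w : Dom k m × ℝ =>
          (pz w.1 * py w.1 + (pz w.1 * pz w.1) * pz w.1) +
            w.2 * (6 * pz w.1 * (1 + (pz w.1)^2)⁻¹) := by
      funext w
      rw [div_eq_mul_inv]
      ring
    rw [hfun]
    have hF : F k m t (Sum.inr (Sum.inr (Sum.inl u))) = (6*t) • PZ k m := by simp only [F]
    rw [hF]
    have H := (((hz (k := k) (m := m) (pOfS k m s, t)).mul (hy (pOfS k m s, t))).add
        (((hz (pOfS k m s, t)).mul (hz (pOfS k m s, t))).mul (hz (pOfS k m s, t)))).add
      ((hT (pOfS k m s, t)).mul (((hz (pOfS k m s, t)).const_mul 6).mul h2i))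
    convert H using 1
    ext w
    all_goals
      simp only [ContinuousLinearMap.add_apply, ContinuousLinearMap.coe_comp',
        Function.comp_apply, ContinuousLinearMap.smul_apply, ContinuousLinearMap.inl_apply,
        ContinuousLinearMap.inr_apply, PX_apply, PY_apply, PZ_apply, PS_apply,
        ContinuousLinearMap.coe_snd', ContinuousLinearMap.coe_fst', smul_eq_mul,
        px_pOfS, py_pOfS, pz_pOfS, ps_pOfS, zero_mul, mul_zero, zero_add, add_zero,
        zero_pow, pow_zero, one_mul, mul_one, neg_zero, inv_one, zero_smul, smul_zero,
            Pi.add_apply, Pi.mul_apply, smul_smul]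
      try ring
  | Sum.inr (Sum.inr (Sum.inr j)) =>
    have hfun0 : (fun w : Dom k m × ℝ =>
        (⇑(EuclideanSpace.equiv (CodIx k m) ℝ) ∘ ftilde k m) w (Sum.inr (Sum.inr (Sum.inr j))))
        = fun w : Dom k m × ℝ => ps w.1 j + w.2 * 0 := rfl
    rw [hfun0]
    have hfun : (fun w : Dom k m × ℝ => ps w.1 j + w.2 * 0)
        = fun w : Dom k m × ℝ => ps w.1 j := by
      funext w; ring
    rw [hfun]
    have hF : F k m t (Sum.inr (Sum.inr (Sum.inr j))) = PS k m j := by simp only [F]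
    rw [hF]
    exact hs j (pOfS k m s, t)

end S7

/-- for every `s ∈ ℝᵐ` and every `t ≠ 0`, the kernel of `Df̃_{((0,0,0,s),t)}`
is exactly the one-dimensional span of `(0, 1)`. -/
theorem statement7 (k m : ℕ) (hk : 1 ≤ k) (s : Fin m → ℝ) (t : ℝ) (ht : t ≠ 0) :
    LinearMap.ker ((fderiv ℝ (ftilde k m) (pOfS k m s, t)) : Dom k m × ℝ →ₗ[ℝ] Cod k m) =
      Submodule.span ℝ {((0, 1) : Dom k m × ℝ)} := by
  rw [(S7.hasF k m s t).fderiv]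
  ext ⟨v, τ⟩
  rw [LinearMap.mem_ker, Submodule.mem_span_singleton]
  constructor
  · intro h
    have h0 : ∀ q : CodIx k m, S7.F k m t q (v, τ) = 0 := by
      intro q
      have : ContinuousLinearMap.pi (S7.F k m t) (v, τ) = 0 := by
        have := congrArg (EuclideanSpace.equiv (CodIx k m) ℝ) h
        simpa [S7.L, funext_iff, LinearMap.pi_apply] using this
      exact congrFun this q
    refine ⟨τ, ?_⟩
    have hv : v = 0 := by
      ext i
      match i with
      | Sum.inl j =>
        have := h0 (Sum.inl ⟨j.1, by omega⟩)
        rw [S7.F, dif_pos j.isLt] at this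
        simpa [S7.PX, px] using this
      | Sum.inr (Sum.inl ⟨⟩) =>
        have := h0 (Sum.inl ⟨2*k, by omega⟩)
        rw [S7.F, dif_neg (by simp)] at this
        simpa [S7.PY, py] using this
      | Sum.inr (Sum.inr (Sum.inl ⟨⟩)) =>
        have := h0 (Sum.inr (Sum.inr (Sum.inl ())))
        simp only [S7.F, ContinuousLinearMap.smul_apply, S7.PZ_apply, smul_eq_mul] at this
        have h6 : (6 : ℝ) * t ≠ 0 := by positivity
        have := mul_eq_zero.mp this
        rcases this with h' | h'
        · exact absurd h' h6
        · simpa [pz] using h'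
      | Sum.inr (Sum.inr (Sum.inr j)) =>
        have := h0 (Sum.inr (Sum.inr (Sum.inr j)))
        simpa [S7.F, S7.PS, ps] using this
    rw [hv]
    simp [Prod.ext_iff]
  · rintro ⟨a, ha⟩
    have hv : v = 0 ∧ τ = a := by
      have := ha.symm
      rw [Prod.ext_iff] at this
      obtain ⟨h1, h2⟩ := this
      simp at h1 h2
      exact ⟨h1, h2⟩
    obtain ⟨hv, -⟩ := hv
    subst hv
    have : ∀ q : CodIx k m, S7.F k m t q ((0 : Dom k m), τ) = 0 := by
      intro q
      match q with
      | Sum.inl j =>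
        rw [S7.F]
        by_cases h : j.1 < 2*k
        · rw [dif_pos h]; simp [S7.PX, px]
        · rw [dif_neg h]; simp [S7.PY, py]
      | Sum.inr (Sum.inl i) => simp [S7.F, S7.PX, px]
      | Sum.inr (Sum.inr (Sum.inl ⟨⟩)) => simp [S7.F, S7.PZ, pz]
      | Sum.inr (Sum.inr (Sum.inr j)) => simp [S7.F, S7.PS, ps]
    show S7.L k m t ((0 : Dom k m), τ) = 0
    rw [S7.L]
    simp only [ContinuousLinearMap.comp_apply]
    have hpi : ContinuousLinearMap.pi (S7.F k m t) ((0 : Dom k m), τ) = 0 := by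
      funext q
      exact this q
    rw [hpi]
    simp
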